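/- arXiv:1905.11655 — 2 statements merged into one kernel-verified Lean document; each statement's English description precedes it below -/
import Mathlib

section
/- For each k ≥ 1 and r ≥ 1, if G is a connected r-regular graph of order n, then the graph G' obtained by replacing each vertex of G with an independent set of size k+2 and each edge with a complete bipartite join is a connected (k+2)r-regular graph of order (k+2)n satisfying γ_{p,k}(G') = γ_t(G). -/
open SimpleGraph

/-- Closed neighborhood of a set of vertices: `N[S]`. -/
def closedNbhd {V : Type*} (G : SimpleGraph V) (S : Set V) : Set V :=
  S ∪ {v | ∃ u ∈ S, G.Adj u v}

/-- The monitored sets `P^i(S)` of the k-power domination process: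
`P^0(S) = N[S]`, `P^{i+1}(S) = ⋃ {N[v] : v ∈ P^i(S), |N[v] \ P^i(S)| ≤ k}`. -/
def monitored {V : Type*} (G : SimpleGraph V) (k : ℕ) (S : Set V) : ℕ → Set V
  | 0 => closedNbhd G S
  | i + 1 => {w | ∃ v ∈ monitored G k S i,
      (closedNbhd G {v} \ monitored G k S i).ncard ≤ k ∧ w ∈ closedNbhd G {v}}

/-- `P^∞(S)`, realized as `P^{|V|}(S)` on a finite vertex type. -/
def monitoredInf {V : Type*} (G : SimpleGraph V) (k : ℕ) (S : Set V) : Set V :=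
  monitored G k S (Nat.card V)

/-- `S` is a k-power dominating set. -/
def IsKPDS {V : Type*} (G : SimpleGraph V) (k : ℕ) (S : Set V) : Prop :=
  monitoredInf G k S = Set.univ

/-- The k-power domination number `γ_{p,k}(G)`. -/
noncomputable def powerDomNumber {V : Type*} (G : SimpleGraph V) (k : ℕ) : ℕ :=
  sInf {m | ∃ S : Set V, S.Finite ∧ S.ncard = m ∧ IsKPDS G k S}

/-- A k-fort: a nonempty set `F` such that every vertex of `N(F) \ F`
has at least `k+1` neighbors in `F`. -/
def IsKFort {V : Type*} (G : SimpleGraph V) (k : ℕ) (F : Set V) : Prop :=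
  F.Nonempty ∧ ∀ v ∈ closedNbhd G F \ F, k + 1 ≤ (G.neighborSet v ∩ F).ncard

/-- Claw-free: no induced `K_{1,3}`. -/
def ClawFree {V : Type*} (G : SimpleGraph V) : Prop :=
  ∀ u a b c : V, G.Adj u a → G.Adj u b → G.Adj u c → a ≠ b → a ≠ c → b ≠ c →
    G.Adj a b ∨ G.Adj a c ∨ G.Adj b c

/-- `r`-regular. -/
def RegularOfDegree {V : Type*} (G : SimpleGraph V) (r : ℕ) : Prop :=
  ∀ v : V, (G.neighborSet v).ncard = r

/-- The domination number `γ(G)`. -/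
noncomputable def domNumber {V : Type*} (G : SimpleGraph V) : ℕ :=
  sInf {m | ∃ S : Set V, S.Finite ∧ S.ncard = m ∧
    ∀ v : V, v ∈ S ∨ ∃ u ∈ S, G.Adj v u}

/-- The total domination number `γ_t(G)`. -/
noncomputable def totalDomNumber {V : Type*} (G : SimpleGraph V) : ℕ :=
  sInf {m | ∃ S : Set V, S.Finite ∧ S.ncard = m ∧ ∀ v : V, ∃ u ∈ S, G.Adj v u}

/-- Replace each vertex of `G` by an independent set of size `m`, and each edge by a
complete bipartite join. -/
def indepExpansion {V : Type*} (G : SimpleGraph V) (m : ℕ) :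
    SimpleGraph (V × Fin m) where
  Adj p p' := G.Adj p.1 p'.1
  symm := ⟨fun _ _ h => h.symm⟩
  loopless := ⟨fun p h => G.loopless.irrefl p.1 h⟩

section Aux
variable {V : Type*}

lemma mem_closedNbhd_self (G : SimpleGraph V) (v : V) : v ∈ closedNbhd G {v} :=
  Or.inl rfl

lemma monitored_eq_univ {G : SimpleGraph V} {k : ℕ} {S : Set V}
    (h : monitored G k S 0 = Set.univ) : ∀ n, monitored G k S n = Set.univ := by
  intro n
  induction n with
  | zero => exact h
  | succ n ih =>
    ext w
    simp only [Set.mem_univ, iff_true, monitored]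
    refine ⟨w, by rw [ih]; trivial, ?_, mem_closedNbhd_self G w⟩
    rw [ih]
    simp

lemma indepExpansion_adj {G : SimpleGraph V} {m : ℕ} {p q : V × Fin m} :
    (indepExpansion G m).Adj p q ↔ G.Adj p.1 q.1 := Iff.rfl

lemma indepExpansion_reachable {G : SimpleGraph V} {m : ℕ}
    (hdeg : ∀ v : V, (G.neighborSet v).Nonempty)
    {u v : V} (h : G.Reachable u v) (i j : Fin m) :
    (indepExpansion G m).Reachable (u, i) (v, j) := by
  obtain ⟨w⟩ := h
  induction w with
  | @nil a =>
    obtain ⟨x, hx⟩ := hdeg a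
    exact (SimpleGraph.Adj.reachable (show (indepExpansion G m).Adj (a, i) (x, i) from hx)).trans
      (SimpleGraph.Adj.reachable (show (indepExpansion G m).Adj (x, i) (a, j) from hx.symm))
  | @cons a b c hadj _ ih =>
    exact (SimpleGraph.Adj.reachable
      (show (indepExpansion G m).Adj (a, i) (b, i) from hadj)).trans ih

lemma indepExpansion_neighborSet (G : SimpleGraph V) (m : ℕ) (p : V × Fin m) :
    (indepExpansion G m).neighborSet p = (G.neighborSet p.1) ×ˢ Set.univ := by
  ext q
  simp [SimpleGraph.mem_neighborSet, indepExpansion_adj, Set.mem_prod]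

lemma ncard_prod_univ {β : Type*} (s : Set V) :
    (s ×ˢ (Set.univ : Set β)).ncard = s.ncard * Nat.card β := by
  rw [← Nat.card_coe_set_eq, ← Nat.card_coe_set_eq,
    Nat.card_congr (Equiv.Set.prod s Set.univ), Nat.card_prod]
  congr 1
  exact Nat.card_congr (Equiv.Set.univ β)

lemma fiber_eq (m : ℕ) (x : V) :
    (Prod.fst ⁻¹' {x} : Set (V × Fin m)) = ({x} : Set V) ×ˢ Set.univ := by
  ext q
  simp only [Set.mem_preimage, Set.mem_singleton_iff, Set.mem_prod, Set.mem_univ, and_true, eq_comm]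

end Aux

lemma lower_tds {V : Type*} [Finite V] (G : SimpleGraph V) (k : ℕ)
    (hdeg : ∀ v : V, (G.neighborSet v).Nonempty)
    {S : Set (V × Fin (k + 2))}
    (hS : monitored (indepExpansion G (k + 2)) k S (Nat.card (V × Fin (k + 2))) = Set.univ) :
    ∃ T : Set V, T.Finite ∧ T.ncard ≤ S.ncard ∧ ∀ v : V, ∃ u ∈ T, G.Adj v u := by
  classical
  set G' := indepExpansion G (k + 2) with hG'
  set D : Set V := Prod.fst '' S with hD
  set A : Set V := {x | ∃ d ∈ D, G.Adj x d} with hA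
  -- key claim: if x is not dominated by D, then S has ≥ 2 vertices in the fiber of x
  have key : ∀ x : V, x ∉ A → 2 ≤ (S ∩ Prod.fst ⁻¹' {x}).ncard := by
    intro x hx
    by_contra hlt
    push_neg at hlt
    have h1 : (S ∩ Prod.fst ⁻¹' {x}).ncard ≤ 1 := by omega
    set fib : Set (V × Fin (k + 2)) := Prod.fst ⁻¹' {x} with hfib
    have hfibcard : fib.ncard = k + 2 := by
      rw [hfib, fiber_eq, ncard_prod_univ, Set.ncard_singleton, one_mul, Nat.card_eq_fintype_card,
        Fintype.card_fin]
    have hdiff : k + 1 ≤ (fib \ S).ncard := by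
      have : fib \ S = fib \ (S ∩ fib) := (Set.diff_inter_self_eq_diff).symm
      rw [this, Set.ncard_diff Set.inter_subset_right (Set.toFinite _)]
      rw [Set.inter_comm] at h1
      omega
    obtain ⟨F, hFsub, hFcard⟩ := Set.exists_subset_card_eq hdiff
    -- F is never monitored
    have mon : ∀ n, ∀ w ∈ monitored G' k S n, w ∉ F := by
      intro n
      induction n with
      | zero =>
        intro w hw hwF
        have hwfib : w ∈ fib \ S := hFsub hwF
        rcases hw with hw | ⟨u, huS, hadj⟩
        · exact hwfib.2 hw
        · exact hx ⟨u.1, ⟨u, huS, rfl⟩, by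
            have : G.Adj u.1 w.1 := hadj
            have hw1 : w.1 = x := hwfib.1
            rw [hw1] at this
            exact this.symm⟩
      | succ n ih =>
        rintro w ⟨v, hv, hcard, hw⟩ hwF
        rcases hw with hw | ⟨u, hu, hadj⟩
        · exact ih w (hw ▸ hv) hwF
        · have hu' : u = v := hu
          rw [hu'] at hadj
          -- v is adjacent to w, w is in the fiber of x, so v is adjacent to all of F
          have hvx : G.Adj v.1 x := by
            have : G.Adj v.1 w.1 := hadj
            rwa [(hFsub hwF).1] at this
          have hFsub2 : F ⊆ closedNbhd G' {v} \ monitored G' k S n := by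
            intro f hf
            refine ⟨Or.inr ⟨v, rfl, ?_⟩, fun hmem => ih f hmem hf⟩
            show G.Adj v.1 f.1
            rwa [(hFsub hf).1]
          have : k + 1 ≤ (closedNbhd G' {v} \ monitored G' k S n).ncard := by
            rw [← hFcard]
            exact Set.ncard_le_ncard hFsub2 (Set.toFinite _)
          omega
    have hFne : F.Nonempty := Set.nonempty_of_ncard_ne_zero (by omega)
    obtain ⟨f, hf⟩ := hFne
    exact mon _ f (by rw [hS]; trivial) hf
  -- choice functions
  have hch1 : ∀ x : V, ∃ p : V × Fin (k + 2), x ∈ D → p ∈ S ∧ p.1 = x := by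
    intro x
    by_cases hx : x ∈ D
    · obtain ⟨p, hp, hpx⟩ := hx
      exact ⟨p, fun _ => ⟨hp, hpx⟩⟩
    · exact ⟨(x, 0), fun h => absurd h hx⟩
  choose f1 hf1 using hch1
  have hch2 : ∀ x : V, ∃ p : V × Fin (k + 2), x ∉ A → p ∈ S ∧ p.1 = x ∧ p ≠ f1 x := by
    intro x
    by_cases hx : x ∉ A
    · have h2 := key x hx
      have : 1 ≤ ((S ∩ Prod.fst ⁻¹' {x}) \ {f1 x}).ncard := by
        have hsub : (S ∩ Prod.fst ⁻¹' {x}) ⊆ ((S ∩ Prod.fst ⁻¹' {x}) \ {f1 x}) ∪ {f1 x} := by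
          intro p hp
          by_cases hpf : p = f1 x
          · exact Or.inr hpf
          · exact Or.inl ⟨hp, hpf⟩
        have h4 := Set.ncard_le_ncard hsub (Set.toFinite _)
        have h5 := Set.ncard_union_le ((S ∩ Prod.fst ⁻¹' {x}) \ {f1 x}) {f1 x}
        rw [Set.ncard_singleton] at h5
        omega
      obtain ⟨p, hp⟩ := Set.nonempty_of_ncard_ne_zero (s := (S ∩ Prod.fst ⁻¹' {x}) \ {f1 x}) (by omega)
      exact ⟨p, fun _ => ⟨hp.1.1, hp.1.2, hp.2⟩⟩
    · exact ⟨(x, 0), fun h => absurd (not_not.mp hx) h⟩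
  choose f2 hf2 using hch2
  set B : Set V := {x | x ∉ A} with hB
  -- counting: |D| + |B| ≤ |S|
  have hcount : D.ncard + B.ncard ≤ S.ncard := by
    have hsub : f1 '' D ∪ f2 '' B ⊆ S := by
      rintro p (⟨x, hx, rfl⟩ | ⟨x, hx, rfl⟩)
      · exact (hf1 x hx).1
      · exact (hf2 x hx).1
    have hdisj : Disjoint (f1 '' D) (f2 '' B) := by
      rw [Set.disjoint_left]
      rintro p ⟨x, hx, rfl⟩ ⟨y, hy, hpy⟩
      have h1 := hf1 x hx
      have h2 := hf2 y hy
      have hxy : y = x := by rw [← h2.2.1, hpy, h1.2]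
      exact h2.2.2 (by rw [hpy, hxy])
    have hinj1 : Set.InjOn f1 D := fun a ha b hb hab => by
      rw [← (hf1 a ha).2, ← (hf1 b hb).2, hab]
    have hinj2 : Set.InjOn f2 B := fun a ha b hb hab => by
      rw [← (hf2 a ha).2.1, ← (hf2 b hb).2.1, hab]
    calc D.ncard + B.ncard = (f1 '' D).ncard + (f2 '' B).ncard := by
          rw [Set.ncard_image_of_injOn hinj1, Set.ncard_image_of_injOn hinj2]
      _ = (f1 '' D ∪ f2 '' B).ncard :=
          (Set.ncard_union_eq hdisj (Set.toFinite _) (Set.toFinite _)).symm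
      _ ≤ S.ncard := Set.ncard_le_ncard hsub (Set.toFinite _)
  -- the total dominating set
  set nb : V → V := fun x => (hdeg x).some with hnb
  have hnb_adj : ∀ x, G.Adj x (nb x) := fun x => (hdeg x).some_mem
  refine ⟨D ∪ nb '' B, Set.toFinite _, ?_, ?_⟩
  · calc (D ∪ nb '' B).ncard ≤ D.ncard + (nb '' B).ncard := Set.ncard_union_le _ _
      _ ≤ D.ncard + B.ncard := by
          have := Set.ncard_image_le (f := nb) (s := B) (Set.toFinite _)
          omega
      _ ≤ S.ncard := hcount
  · intro v
    by_cases hv : v ∈ A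
    · obtain ⟨d, hd, hadj⟩ := hv
      exact ⟨d, Or.inl hd, hadj⟩
    · exact ⟨nb v, Or.inr ⟨v, hv, rfl⟩, hnb_adj v⟩

theorem indepExpansion_powerDomNumber {V : Type*} [Finite V] (G : SimpleGraph V)
    (k r : ℕ) (hk : 1 ≤ k) (hr : 1 ≤ r) (hconn : G.Connected)
    (hreg : RegularOfDegree G r) :
    (indepExpansion G (k + 2)).Connected ∧
    RegularOfDegree (indepExpansion G (k + 2)) ((k + 2) * r) ∧
    Nat.card (V × Fin (k + 2)) = (k + 2) * Nat.card V ∧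
    powerDomNumber (indepExpansion G (k + 2)) k = totalDomNumber G := by
  classical
  have hdeg : ∀ v : V, (G.neighborSet v).Nonempty := fun v =>
    Set.nonempty_of_ncard_ne_zero (by rw [hreg v]; omega)
  have hne : Nonempty V := hconn.nonempty
  refine ⟨?_, ?_, ?_, ?_⟩
  · haveI : Nonempty (V × Fin (k + 2)) := ⟨(Classical.arbitrary V, 0)⟩
    exact ⟨fun p q => indepExpansion_reachable hdeg (hconn.preconnected p.1 q.1) p.2 q.2⟩
  · intro p
    rw [indepExpansion_neighborSet, ncard_prod_univ, hreg p.1, Nat.card_eq_fintype_card,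
      Fintype.card_fin, mul_comm]
  · rw [Nat.card_prod]
    simp [Nat.card_eq_fintype_card, mul_comm]
  · set G' := indepExpansion G (k + 2) with hG'
    set tset := {m | ∃ S : Set V, S.Finite ∧ S.ncard = m ∧ ∀ v : V, ∃ u ∈ S, G.Adj v u} with htset
    set pset := {m | ∃ S : Set (V × Fin (k + 2)), S.Finite ∧ S.ncard = m ∧ IsKPDS G' k S}
      with hpset
    have upper : ∀ m ∈ tset, m ∈ pset := by
      rintro m ⟨S, hfin, hcard, hdom⟩
      refine ⟨(fun v => (v, (0 : Fin (k + 2)))) '' S, Set.toFinite _, ?_, ?_⟩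
      · rw [Set.ncard_image_of_injective _ (fun a b hab => congrArg Prod.fst hab)]
        exact hcard
      · apply monitored_eq_univ
        ext p
        simp only [Set.mem_univ, iff_true]
        obtain ⟨u, hu, hadj⟩ := hdom p.1
        exact Or.inr ⟨(u, 0), Set.mem_image_of_mem _ hu, hadj.symm⟩
    have htne : tset.Nonempty := ⟨(Set.univ : Set V).ncard, Set.univ, Set.toFinite _, rfl,
      fun v => by obtain ⟨u, hu⟩ := hdeg v; exact ⟨u, trivial, hu⟩⟩
    show sInf pset = sInf tset
    apply le_antisymm
    · exact Nat.sInf_le (upper _ (Nat.sInf_mem htne))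
    · have hpne : pset.Nonempty := ⟨_, upper _ (Nat.sInf_mem htne)⟩
      obtain ⟨S, hfin, hcard, hkpds⟩ := Nat.sInf_mem hpne
      obtain ⟨T, hTfin, hTcard, hTdom⟩ := lower_tds G k hdeg hkpds
      calc sInf tset ≤ T.ncard := Nat.sInf_le ⟨T, hTfin, rfl, hTdom⟩
        _ ≤ S.ncard := hTcard
        _ = sInf pset := hcard
end

section
/- For every l ≥ 1, k ≥ l and t ≥ 1, the graph C_{k,t} (a cycle of t copies of A_l, where A_l = K_{k+l+2} minus l edges sharing a common vertex, with consecutive copies joined by l edges so the result is (k+l+1)-regular and claw-free) is a connected claw-free (k+l+1)-regular graph of order n = t(k+l+2) with γ_{p,k}(C_{k,t}) ≥ t = n/(k+l+2). -/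
open SimpleGraph

/-- The graph `C_{k,t}`: a cycle of `t` copies of `A_l`, where `A_l` is
`K_{k+l+2}` minus the `l` edges joining vertex `0` to vertices `1,…,l`;
consecutive copies are joined by the `l` edges from vertices `1,…,l` of copy `i`
to vertex `0` of copy `i+1`, restoring `(k+l+1)`-regularity. -/
def Cgraph (k l t : ℕ) [NeZero t] : SimpleGraph (Fin t × Fin (k + l + 2)) :=
  SimpleGraph.fromRel (fun p p' =>
    (p.1 = p'.1 ∧ ¬(p.2.val = 0 ∧ 1 ≤ p'.2.val ∧ p'.2.val ≤ l) ∧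
      ¬(p'.2.val = 0 ∧ 1 ≤ p.2.val ∧ p.2.val ≤ l)) ∨
    (p'.1 = p.1 + 1 ∧ p'.2.val = 0 ∧ 1 ≤ p.2.val ∧ p.2.val ≤ l))

lemma cadj (k l t : ℕ) [NeZero t] (p p' : Fin t × Fin (k+l+2)) :
    (Cgraph k l t).Adj p p' ↔ p ≠ p' ∧
    ((p.1 = p'.1 ∧ ¬(p.2.val = 0 ∧ 1 ≤ p'.2.val ∧ p'.2.val ≤ l) ∧
        ¬(p'.2.val = 0 ∧ 1 ≤ p.2.val ∧ p.2.val ≤ l))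
      ∨ (p'.1 = p.1 + 1 ∧ p'.2.val = 0 ∧ 1 ≤ p.2.val ∧ p.2.val ≤ l)
      ∨ (p.1 = p'.1 + 1 ∧ p.2.val = 0 ∧ 1 ≤ p'.2.val ∧ p'.2.val ≤ l)) := by
  rw [Cgraph, fromRel_adj]
  constructor
  · rintro ⟨hne, (⟨h1,h2,h3⟩ | h) | (⟨h1,h2,h3⟩ | h)⟩
    · exact ⟨hne, Or.inl ⟨h1, h2, h3⟩⟩
    · exact ⟨hne, Or.inr (Or.inl h)⟩
    · exact ⟨hne, Or.inl ⟨h1.symm, h3, h2⟩⟩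
    · exact ⟨hne, Or.inr (Or.inr h)⟩
  · rintro ⟨hne, h | h | h⟩
    · exact ⟨hne, Or.inl (Or.inl h)⟩
    · exact ⟨hne, Or.inl (Or.inr h)⟩
    · exact ⟨hne, Or.inr (Or.inr h)⟩

variable {k l t : ℕ} [NeZero t]

/-- the neighbor parametrization map for vertex (i,j) -/
def hmap (l : ℕ) {k t : ℕ} [NeZero t] (i : Fin t) (j x : Fin (k+l+2)) :
    Fin t × Fin (k+l+2) :=
  if j.val = 0 ∧ 1 ≤ x.val ∧ x.val ≤ l then (i-1, x)
  else if 1 ≤ j.val ∧ j.val ≤ l ∧ x.val = 0 then (i+1, x)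
  else (i, x)

lemma hmap_snd (i : Fin t) (j x : Fin (k+l+2)) : (hmap l i j x).2 = x := by
  unfold hmap; split_ifs <;> rfl

lemma hmap_inj (i : Fin t) (j : Fin (k+l+2)) : Function.Injective (hmap l i j) := by
  intro x y h
  have := congrArg Prod.snd h
  rwa [hmap_snd, hmap_snd] at this

lemma pair_ne {t n : ℕ} {i i' : Fin t} {x y : Fin n} (h : x.val ≠ y.val) :
    (i, x) ≠ (i', y) := fun hc => h (congrArg (fun q => q.2.val) hc)

open Fin.CommRing in
lemma nbhd_eq (i : Fin t) (j : Fin (k+l+2)) :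
    (Cgraph k l t).neighborSet (i, j) = hmap l i j '' {j}ᶜ := by
  ext p
  simp only [mem_neighborSet, Set.mem_image, Set.mem_compl_iff, Set.mem_singleton_iff]
  constructor
  · intro h
    rw [cadj] at h
    dsimp only at h
    obtain ⟨hne, ⟨h1, h2, h3⟩ | ⟨h1, h2, h3, h4⟩ | ⟨h1, h2, h3, h4⟩⟩ := h
    · refine ⟨p.2, fun hj => hne (by rw [Prod.ext_iff]; exact ⟨h1, hj.symm⟩), ?_⟩
      unfold hmap
      rw [if_neg (by omega), if_neg (by omega), Prod.ext_iff]
      exact ⟨h1, rfl⟩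
    · refine ⟨p.2, Fin.ne_of_val_ne (by omega), ?_⟩
      unfold hmap
      rw [if_neg (by omega), if_pos (by omega), Prod.ext_iff]
      exact ⟨h1.symm, rfl⟩
    · refine ⟨p.2, Fin.ne_of_val_ne (by omega), ?_⟩
      unfold hmap
      rw [if_pos (by omega), Prod.ext_iff]
      exact ⟨by rw [h1]; ring, rfl⟩
  · rintro ⟨x, hx, rfl⟩
    rw [cadj]
    unfold hmap
    split_ifs with hc1 hc2
    · dsimp only
      exact ⟨pair_ne (by omega), Or.inr (Or.inr ⟨by ring, by omega, by omega, by omega⟩)⟩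
    · dsimp only
      exact ⟨pair_ne (by omega), Or.inr (Or.inl ⟨rfl, by omega, by omega, by omega⟩)⟩
    · dsimp only
      simp only [not_and] at hc1 hc2
      exact ⟨fun hc => hx (congrArg Prod.snd hc).symm, Or.inl ⟨rfl, by omega, by omega⟩⟩

lemma snd_ne {t n : ℕ} {p q : Fin t × Fin n} (h : p ≠ q) (h1 : p.1 = q.1) :
    p.2.val ≠ q.2.val :=
  fun hv => h (Prod.ext h1 (Fin.val_injective hv))

lemma adj_d1 {i : Fin t} {x y : Fin (k+l+2)} (hxy : x.val ≠ y.val)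
    (h2 : ¬(x.val = 0 ∧ 1 ≤ y.val ∧ y.val ≤ l))
    (h3 : ¬(y.val = 0 ∧ 1 ≤ x.val ∧ x.val ≤ l)) :
    (Cgraph k l t).Adj (i, x) (i, y) := by
  rw [cadj]
  exact ⟨pair_ne hxy, Or.inl ⟨rfl, h2, h3⟩⟩

lemma adj_shape {i : Fin t} {j : Fin (k+l+2)} {p : Fin t × Fin (k+l+2)}
    (h : (Cgraph k l t).Adj (i, j) p) :
    (p.1 = i ∧ p.2.val ≠ j.val ∧ ¬(j.val = 0 ∧ 1 ≤ p.2.val ∧ p.2.val ≤ l) ∧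
        ¬(p.2.val = 0 ∧ 1 ≤ j.val ∧ j.val ≤ l))
    ∨ (p.1 = i + 1 ∧ p.2.val = 0 ∧ 1 ≤ j.val ∧ j.val ≤ l)
    ∨ (i = p.1 + 1 ∧ j.val = 0 ∧ 1 ≤ p.2.val ∧ p.2.val ≤ l) := by
  rw [cadj] at h
  dsimp only at h
  obtain ⟨hne, ⟨h1, h2, h3⟩ | h | h⟩ := h
  · exact Or.inl ⟨h1.symm, snd_ne (Ne.symm hne) h1.symm, h2, h3⟩
  · exact Or.inr (Or.inl h)
  · exact Or.inr (Or.inr h)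

lemma regular_C : ∀ v : Fin t × Fin (k+l+2),
    ((Cgraph k l t).neighborSet v).ncard = k + l + 1 := by
  rintro ⟨i, j⟩
  rw [nbhd_eq, Set.ncard_image_of_injective _ (hmap_inj i j)]
  have := Set.ncard_add_ncard_compl ({j} : Set (Fin (k+l+2)))
  rw [Set.ncard_singleton, Nat.card_eq_fintype_card, Fintype.card_fin] at this
  omega

lemma adj_d1' {p q : Fin t × Fin (k+l+2)} (h1 : p.1 = q.1)
    (hxy : p.2.val ≠ q.2.val)
    (h2 : ¬(p.2.val = 0 ∧ 1 ≤ q.2.val ∧ q.2.val ≤ l))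
    (h3 : ¬(q.2.val = 0 ∧ 1 ≤ p.2.val ∧ p.2.val ≤ l)) :
    (Cgraph k l t).Adj p q := by
  rw [cadj]
  exact ⟨fun hc => hxy (congrArg (fun r => r.2.val) hc), Or.inl ⟨h1, h2, h3⟩⟩

lemma claw_C (hl : 1 ≤ l) :
    ∀ u a b c : Fin t × Fin (k+l+2), (Cgraph k l t).Adj u a → (Cgraph k l t).Adj u b →
      (Cgraph k l t).Adj u c → a ≠ b → a ≠ c → b ≠ c →
      (Cgraph k l t).Adj a b ∨ (Cgraph k l t).Adj a c ∨ (Cgraph k l t).Adj b c := by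
  rintro ⟨u1, u2⟩ a b c ha hb hc hab hac hbc
  rcases Nat.lt_or_ge u2.val (l+1) with hu | hu
  · rcases Nat.eq_zero_or_pos u2.val with h0 | h1
    · -- u2 = 0
      have shape : ∀ p, (Cgraph k l t).Adj (u1, u2) p →
          (p.1 = u1 ∧ l+1 ≤ p.2.val) ∨ (u1 = p.1+1 ∧ 1 ≤ p.2.val ∧ p.2.val ≤ l) := by
        intro p hp
        rcases adj_shape hp with ⟨x1, x2, x3, x4⟩ | ⟨_, _, x3, _⟩ | x
        · exact Or.inl ⟨x1, by omega⟩
        · omega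
        · exact Or.inr ⟨x.1, x.2.2⟩
      rcases shape a ha with ⟨a1, a2⟩ | ⟨a1, a2⟩ <;>
        rcases shape b hb with ⟨b1, b2⟩ | ⟨b1, b2⟩ <;>
          rcases shape c hc with ⟨c1, c2⟩ | ⟨c1, c2⟩
      · exact Or.inl (adj_d1' (a1.trans b1.symm) (snd_ne hab (a1.trans b1.symm)) (by omega) (by omega))
      · exact Or.inl (adj_d1' (a1.trans b1.symm) (snd_ne hab (a1.trans b1.symm)) (by omega) (by omega))
      · exact Or.inr (Or.inl (adj_d1' (a1.trans c1.symm) (snd_ne hac (a1.trans c1.symm)) (by omega) (by omega)))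
      · exact Or.inr (Or.inr (adj_d1' (add_right_cancel (b1.symm.trans c1)) (snd_ne hbc (add_right_cancel (b1.symm.trans c1))) (by omega) (by omega)))
      · exact Or.inr (Or.inr (adj_d1' (b1.trans c1.symm) (snd_ne hbc (b1.trans c1.symm)) (by omega) (by omega)))
      · exact Or.inr (Or.inl (adj_d1' (add_right_cancel (a1.symm.trans c1)) (snd_ne hac (add_right_cancel (a1.symm.trans c1))) (by omega) (by omega)))
      · exact Or.inl (adj_d1' (add_right_cancel (a1.symm.trans b1)) (snd_ne hab (add_right_cancel (a1.symm.trans b1))) (by omega) (by omega))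
      · exact Or.inl (adj_d1' (add_right_cancel (a1.symm.trans b1)) (snd_ne hab (add_right_cancel (a1.symm.trans b1))) (by omega) (by omega))
    · -- 1 ≤ u2 ≤ l
      have shape : ∀ p, (Cgraph k l t).Adj (u1, u2) p →
          (p.1 = u1 ∧ p.2.val ≠ 0) ∨ (p.1 = u1+1 ∧ p.2.val = 0) := by
        intro p hp
        rcases adj_shape hp with ⟨x1, x2, x3, x4⟩ | ⟨x1, x2, _, _⟩ | x
        · exact Or.inl ⟨x1, by omega⟩
        · exact Or.inr ⟨x1, x2⟩
        · omega
      have uniq : ∀ p q : Fin t × Fin (k+l+2), p.1 = u1+1 → p.2.val = 0 →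
          q.1 = u1+1 → q.2.val = 0 → p = q := by
        intro p q hp1 hp2 hq1 hq2
        exact Prod.ext (hp1.trans hq1.symm) (Fin.val_injective (hp2.trans hq2.symm))
      rcases shape a ha with ⟨a1, a2⟩ | ⟨a1, a2⟩ <;>
        rcases shape b hb with ⟨b1, b2⟩ | ⟨b1, b2⟩ <;>
          rcases shape c hc with ⟨c1, c2⟩ | ⟨c1, c2⟩
      · exact Or.inl (adj_d1' (a1.trans b1.symm) (snd_ne hab (a1.trans b1.symm)) (by omega) (by omega))
      · exact Or.inl (adj_d1' (a1.trans b1.symm) (snd_ne hab (a1.trans b1.symm)) (by omega) (by omega))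
      · exact Or.inr (Or.inl (adj_d1' (a1.trans c1.symm) (snd_ne hac (a1.trans c1.symm)) (by omega) (by omega)))
      · exact absurd (uniq b c b1 b2 c1 c2) hbc
      · exact Or.inr (Or.inr (adj_d1' (b1.trans c1.symm) (snd_ne hbc (b1.trans c1.symm)) (by omega) (by omega)))
      · exact absurd (uniq a c a1 a2 c1 c2) hac
      · exact absurd (uniq a b a1 a2 b1 b2) hab
      · exact absurd (uniq a b a1 a2 b1 b2) hab
  · -- l+1 ≤ u2
    have shape : ∀ p, (Cgraph k l t).Adj (u1, u2) p → p.1 = u1 ∧ p.2.val ≠ u2.val := by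
      intro p hp
      rcases adj_shape hp with ⟨x1, x2, _, _⟩ | ⟨_, _, _, x4⟩ | x
      · exact ⟨x1, x2⟩
      · omega
      · omega
    obtain ⟨a1, a2⟩ := shape a ha
    obtain ⟨b1, b2⟩ := shape b hb
    obtain ⟨c1, c2⟩ := shape c hc
    have hab' := snd_ne hab (a1.trans b1.symm)
    have hac' := snd_ne hac (a1.trans c1.symm)
    have hbc' := snd_ne hbc (b1.trans c1.symm)
    rcases Nat.eq_zero_or_pos a.2.val with ha0 | ha0
    · exact Or.inr (Or.inr (adj_d1' (b1.trans c1.symm) hbc' (by omega) (by omega)))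
    · rcases Nat.eq_zero_or_pos b.2.val with hb0 | hb0
      · exact Or.inr (Or.inl (adj_d1' (a1.trans c1.symm) hac' (by omega) (by omega)))
      · exact Or.inl (adj_d1' (a1.trans b1.symm) hab' (by omega) (by omega))

lemma reach_within (i : Fin t) (j : Fin (k+l+2)) :
    (Cgraph k l t).Reachable (i, ⟨l+1, by omega⟩) (i, j) := by
  by_cases h : j = (⟨l+1, by omega⟩ : Fin (k+l+2))
  · rw [h]
  · exact (adj_d1' (p := (i, (⟨l+1, by omega⟩ : Fin (k+l+2)))) (q := (i, j)) rfl
      (fun hv => h (Fin.val_injective hv.symm))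
      (show ¬(l+1 = 0 ∧ 1 ≤ j.val ∧ j.val ≤ l) by omega)
      (show ¬(j.val = 0 ∧ 1 ≤ l+1 ∧ l+1 ≤ l) by omega)).reachable

lemma reach_step (hl : 1 ≤ l) (i : Fin t) :
    (Cgraph k l t).Reachable (i, ⟨l+1, by omega⟩) (i+1, ⟨l+1, by omega⟩) := by
  have h1 : (Cgraph k l t).Adj (i, ⟨l+1, by omega⟩) (i, ⟨1, by omega⟩) :=
    adj_d1' rfl (show l+1 ≠ 1 by omega)
      (show ¬(l+1 = 0 ∧ 1 ≤ 1 ∧ 1 ≤ l) by omega)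
      (show ¬(1 = 0 ∧ 1 ≤ l+1 ∧ l+1 ≤ l) by omega)
  have h2 : (Cgraph k l t).Adj (i, (⟨1, by omega⟩ : Fin (k+l+2))) (i+1, ⟨0, by omega⟩) := by
    rw [cadj]
    exact ⟨pair_ne (show (1:ℕ) ≠ 0 by omega),
      Or.inr (Or.inl ⟨rfl, rfl, le_refl 1, hl⟩)⟩
  have h3 : (Cgraph k l t).Adj (i+1, (⟨0, by omega⟩ : Fin (k+l+2))) (i+1, ⟨l+1, by omega⟩) :=
    adj_d1' rfl (show (0:ℕ) ≠ l+1 by omega)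
      (show ¬(0 = 0 ∧ 1 ≤ l+1 ∧ l+1 ≤ l) by omega)
      (show ¬(l+1 = 0 ∧ 1 ≤ 0 ∧ 0 ≤ l) by omega)
  exact (h1.reachable.trans h2.reachable).trans h3.reachable

open Fin.CommRing in
lemma connected_C (hl : 1 ≤ l) : (Cgraph k l t).Connected := by
  rw [connected_iff]
  refine ⟨?_, ⟨((0 : Fin t), (0 : Fin (k+l+2)))⟩⟩
  have key : ∀ (n : ℕ) (i : Fin t),
      (Cgraph k l t).Reachable (i, ⟨l+1, by omega⟩) (i + (n : Fin t), ⟨l+1, by omega⟩) := by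
    intro n
    induction n with
    | zero => intro i; rw [Nat.cast_zero, add_zero]
    | succ m ih =>
      intro i
      have h : i + ((m+1 : ℕ) : Fin t) = (i + (m : Fin t)) + 1 := by push_cast; ring
      rw [h]
      exact (ih i).trans (reach_step hl _)
  have key2 : ∀ i i' : Fin t,
      (Cgraph k l t).Reachable (i, ⟨l+1, by omega⟩) (i', ⟨l+1, by omega⟩) := by
    intro i i'
    have h := key (i' - i).val i
    rwa [Fin.cast_val_eq_self, add_sub_cancel] at h
  intro u v
  have hu := reach_within (k := k) (l := l) u.1 u.2
  have hv := reach_within (k := k) (l := l) v.1 v.2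
  exact (hu.symm.trans (key2 u.1 v.1)).trans hv

lemma monitored_univ {V : Type*} (G : SimpleGraph V) (k : ℕ) (n : ℕ) :
    monitored G k Set.univ n = Set.univ := by
  induction n with
  | zero =>
    apply Set.eq_univ_of_univ_subset
    exact Set.subset_union_left
  | succ m ih =>
    apply Set.eq_univ_of_univ_subset
    intro w _
    refine ⟨w, by rw [ih]; trivial, ?_, Or.inl rfl⟩
    rw [ih]
    simp

lemma univ_KPDS {V : Type*} (G : SimpleGraph V) (k : ℕ) : IsKPDS G k Set.univ :=
  monitored_univ G k _

lemma fort_block {V : Type*} [Finite V] (G : SimpleGraph V) (k : ℕ) (F S : Set V)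
    (hfort : ∀ v ∉ F, ∀ w ∈ F, G.Adj v w → k + 1 ≤ (closedNbhd G {v} ∩ F).ncard)
    (h0 : closedNbhd G S ∩ F = ∅) : ∀ n, monitored G k S n ∩ F = ∅ := by
  intro n
  induction n with
  | zero => exact h0
  | succ m ih =>
    by_contra hne
    obtain ⟨x, hx1, hx2⟩ := Set.nonempty_iff_ne_empty.2 hne
    obtain ⟨v, hv, hcnt, hxv⟩ := hx1
    have hvF : v ∉ F := fun hvF => Set.eq_empty_iff_forall_notMem.1 ih v ⟨hv, hvF⟩
    have hadj : G.Adj v x := by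
      rcases hxv with h | ⟨u, hu, hadj⟩
      · exact absurd (Set.mem_singleton_iff.1 h ▸ hx2) hvF
      · rwa [Set.mem_singleton_iff.1 hu] at hadj
    have hsub : closedNbhd G {v} ∩ F ⊆ closedNbhd G {v} \ monitored G k S m := by
      rintro y ⟨hy1, hy2⟩
      exact ⟨hy1, fun hy3 => Set.eq_empty_iff_forall_notMem.1 ih y ⟨hy3, hy2⟩⟩
    have := (hfort v hvF x hx2 hadj).trans
      ((Set.ncard_le_ncard hsub (Set.toFinite _)).trans hcnt)
    omega

section CgraphFort

variable {k l t : ℕ} [NeZero t]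

/-- the k-fort inside copy `i`: vertices with second coordinate ≥ l+1. -/
def Fset (k l t : ℕ) [NeZero t] (i : Fin t) : Set (Fin t × Fin (k+l+2)) :=
  {p | p.1 = i ∧ l+1 ≤ p.2.val}

lemma Fset_ncard (i : Fin t) : (Fset k l t i).ncard = k + 1 := by
  have himg : Fset k l t i = (fun x => (i, x)) '' {x : Fin (k+l+2) | l+1 ≤ x.val} := by
    ext p
    constructor
    · rintro ⟨h1, h2⟩
      exact ⟨p.2, h2, by rw [Prod.ext_iff]; exact ⟨h1.symm, rfl⟩⟩
    · rintro ⟨x, hx, rfl⟩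
      exact ⟨rfl, hx⟩
  have hIci : {x : Fin (k+l+2) | l+1 ≤ x.val}
      = ↑(Finset.Ici (⟨l+1, by omega⟩ : Fin (k+l+2))) := by
    ext x; simp [Fin.le_def]
  rw [himg, Set.ncard_image_of_injective _ (fun x y h => congrArg Prod.snd h), hIci,
    Set.ncard_coe_finset, Fin.card_Ici]
  have h' : (⟨l+1, by omega⟩ : Fin (k+l+2)).val = l+1 := rfl
  omega

lemma adj_into_F {i : Fin t} {v w : Fin t × Fin (k+l+2)} (hw : w ∈ Fset k l t i)
    (hadj : (Cgraph k l t).Adj v w) : v.1 = i := by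
  obtain ⟨hw1, hw2⟩ := hw
  rw [cadj] at hadj
  obtain ⟨_, ⟨h1, _, _⟩ | ⟨_, h2, _⟩ | ⟨_, _, _, h4⟩⟩ := hadj
  · exact h1.trans hw1
  · omega
  · omega

lemma Fset_fort (i : Fin t) : ∀ v ∉ Fset k l t i, ∀ w ∈ Fset k l t i,
    (Cgraph k l t).Adj v w → k + 1 ≤ (closedNbhd (Cgraph k l t) {v} ∩ Fset k l t i).ncard := by
  intro v hv w hw hadj
  have hv1 : v.1 = i := adj_into_F hw hadj
  have hv2 : v.2.val ≤ l := by
    by_contra hcon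
    exact hv ⟨hv1, by omega⟩
  have hsub : Fset k l t i ⊆ closedNbhd (Cgraph k l t) {v} ∩ Fset k l t i := by
    intro u hu
    obtain ⟨hu1, hu2⟩ := hu
    refine ⟨Or.inr ⟨v, rfl, ?_⟩, hu1, hu2⟩
    exact adj_d1' (hv1.trans hu1.symm) (by omega) (by omega) (by omega)
  calc k + 1 = (Fset k l t i).ncard := (Fset_ncard i).symm
    _ ≤ _ := Set.ncard_le_ncard hsub (Set.toFinite _)

lemma copy_hit {S : Set (Fin t × Fin (k+l+2))}
    (hS : IsKPDS (Cgraph k l t) k S) (i : Fin t) : ∃ s ∈ S, s.1 = i := by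
  by_contra hcon
  push_neg at hcon
  have h0 : closedNbhd (Cgraph k l t) S ∩ Fset k l t i = ∅ := by
    rw [Set.eq_empty_iff_forall_notMem]
    rintro x ⟨hx1, hx2⟩
    rcases hx1 with h | ⟨u, hu, hadj⟩
    · exact hcon x h hx2.1
    · exact hcon u hu (adj_into_F hx2 hadj)
  have hblock := fort_block (Cgraph k l t) k (Fset k l t i) S (Fset_fort i) h0
    (Nat.card (Fin t × Fin (k+l+2)))
  have : ((i, ⟨l+1, by omega⟩) : Fin t × Fin (k+l+2)) ∈
      monitoredInf (Cgraph k l t) k S := by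
    rw [hS]; trivial
  exact Set.eq_empty_iff_forall_notMem.1 hblock _ ⟨this, rfl, le_refl _⟩

end CgraphFort

theorem Cgraph_tight (k l t : ℕ) (hl : 1 ≤ l) (hk : l ≤ k) (ht : 1 ≤ t) :
    haveI : NeZero t := ⟨by omega⟩
    (Cgraph k l t).Connected ∧ ClawFree (Cgraph k l t) ∧
      RegularOfDegree (Cgraph k l t) (k + l + 1) ∧
      Nat.card (Fin t × Fin (k + l + 2)) = t * (k + l + 2) ∧
      t ≤ powerDomNumber (Cgraph k l t) k := by
  haveI : NeZero t := ⟨by omega⟩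
  refine ⟨connected_C hl, claw_C hl, regular_C, ?_, ?_⟩
  · rw [Nat.card_eq_fintype_card, Fintype.card_prod, Fintype.card_fin, Fintype.card_fin]
  · apply le_csInf
    · exact ⟨(Set.univ : Set (Fin t × Fin (k+l+2))).ncard, Set.univ, Set.finite_univ,
        rfl, univ_KPDS _ _⟩
    · rintro m ⟨S, hfin, rfl, hpds⟩
      have himg : Prod.fst '' S = (Set.univ : Set (Fin t)) := by
        rw [Set.eq_univ_iff_forall]
        intro i
        obtain ⟨s, hs, hs1⟩ := copy_hit hpds i
        exact ⟨s, hs, hs1⟩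
      calc t = (Set.univ : Set (Fin t)).ncard := by
              rw [Set.ncard_univ, Nat.card_eq_fintype_card, Fintype.card_fin]
        _ = (Prod.fst '' S).ncard := by rw [himg]
        _ ≤ S.ncard := Set.ncard_image_le hfin
end
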